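/- arXiv:2503.03055 — 2 statements merged into one kernel-verified Lean document; each statement's English description precedes it below -/
import Mathlib

section
/- For every integer n ≥ 2, the Mycielskian of the star S_n satisfies C(μ(S_n)) = (16n² + 72n + 32)/16 and B⁻(μ(S_n)) = (2n² + n + 2)/(2n + 3). -/
open SimpleGraph Polynomial Finset

/-- The Mycielskian `μ(G)` of a simple graph `G`. Vertices `Sum.inl v` are the original
vertices `v_i`, vertices `Sum.inr (Sum.inl v)` are the shadow vertices `u_i`, and
`Sum.inr (Sum.inr ())` is the apex vertex `w`.  Edges: the edges of `G`, the edges `w u_i`,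
and the edges `u_i v_j`, `u_j v_i` for every edge `v_i v_j` of `G`. -/
def mycielskian {V : Type*} (G : SimpleGraph V) : SimpleGraph (V ⊕ V ⊕ Unit) :=
  SimpleGraph.fromRel (fun a b =>
    match a, b with
    | Sum.inl a, Sum.inl b => G.Adj a b
    | Sum.inl a, Sum.inr (Sum.inl b) => G.Adj a b
    | Sum.inr (Sum.inl _), Sum.inr (Sum.inr _) => True
    | _, _ => False)

/-- `distCount G k` is `d(G,k)`, the number of unordered pairs of distinct vertices of `G`
whose graph distance is exactly `k`. -/
noncomputable def distCount {V : Type*} (G : SimpleGraph V) (k : ℕ) : ℕ :=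
  Nat.card {e : Sym2 V // ¬ e.IsDiag ∧ Sym2.lift ⟨G.dist, fun _ _ => G.dist_comm⟩ e = k}

/-- The Hosoya polynomial `H(G,x) = Σ_{k=1}^{D(G)} d(G,k) x^k` (with rational coefficients). -/
noncomputable def hosoya {V : Type*} (G : SimpleGraph V) : Polynomial ℚ :=
  ∑ k ∈ Finset.Icc 1 G.diam, (distCount G k : ℚ) • Polynomial.X ^ k

/-- The Wiener index `W(G)`: the sum of distances over all unordered pairs of distinct
vertices (the diagonal contributes `0`, so we may sum over ordered pairs and halve). -/
noncomputable def wiener {V : Type*} (G : SimpleGraph V) [Fintype V] : ℚ :=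
  (∑ u : V, ∑ v : V, (G.dist u v : ℚ)) / 2

/-- The Hyper-Wiener index `WW(G) = (1/2) Σ_{{u,v}} (d(u,v)² + d(u,v))`. -/
noncomputable def hyperWiener {V : Type*} (G : SimpleGraph V) [Fintype V] : ℚ :=
  (∑ u : V, ∑ v : V, ((G.dist u v : ℚ) ^ 2 + (G.dist u v : ℚ))) / 4

/-- The TSZ index `TSZ(G) = (1/6) Σ_{{u,v}} d³ + (1/2) Σ_{{u,v}} d² + (1/3) Σ_{{u,v}} d`. -/
noncomputable def tszIndex {V : Type*} (G : SimpleGraph V) [Fintype V] : ℚ :=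
  (∑ u : V, ∑ v : V, (G.dist u v : ℚ) ^ 3) / 12
    + (∑ u : V, ∑ v : V, (G.dist u v : ℚ) ^ 2) / 4
    + (∑ u : V, ∑ v : V, (G.dist u v : ℚ)) / 6

/-- The Harary index `Har(G) = Σ_{{u,v}} 1/d(u,v)` (diagonal terms are `0⁻¹ = 0`). -/
noncomputable def harary {V : Type*} (G : SimpleGraph V) [Fintype V] : ℚ :=
  (∑ u : V, ∑ v : V, ((G.dist u v : ℚ))⁻¹) / 2

/-- The closeness `C(G) = Σ_u Σ_{v ≠ u} 2^{-d(u,v)}` over ordered pairs of distinct vertices. -/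
noncomputable def closeness {V : Type*} (G : SimpleGraph V) [Fintype V] : ℚ :=
  letI := Classical.decEq V
  ∑ u : V, ∑ v : V, if v = u then 0 else ((1 : ℚ) / 2) ^ (G.dist u v)

/-- `σ_{uv}`: the number of shortest paths (walks of length `dist u v`) from `u` to `v`. -/
noncomputable def numSP {V : Type*} (G : SimpleGraph V) (u v : V) : ℕ :=
  Nat.card {p : G.Walk u v // p.length = G.dist u v}

/-- `σ_{uv}(w)`: the number of shortest paths from `u` to `v` passing through `w`. -/
noncomputable def numSPthrough {V : Type*} (G : SimpleGraph V) (w u v : V) : ℕ :=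
  Nat.card {p : G.Walk u v // p.length = G.dist u v ∧ w ∈ p.support}

/-- The betweenness centrality `B_w = Σ_{{u,v}, u ≠ w ≠ v} σ_{uv}(w)/σ_{uv}` of a vertex `w`,
summed over unordered pairs of distinct vertices (ordered pairs, halved). -/
noncomputable def btwVertex {V : Type*} (G : SimpleGraph V) [Fintype V] (w : V) : ℚ :=
  letI := Classical.decEq V
  (∑ u : V, ∑ v : V,
    if u ≠ v ∧ u ≠ w ∧ v ≠ w then (numSPthrough G w u v : ℚ) / (numSP G u v) else 0) / 2

/-- The betweenness centrality of a graph: `B⁻(G) = (1/N) Σ_w B_w`. -/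
noncomputable def btw {V : Type*} (G : SimpleGraph V) [Fintype V] : ℚ :=
  (∑ w : V, btwVertex G w) / (Fintype.card V)

/-- The star graph `S_n`: center `0` joined to the `n` leaves `1, …, n`. -/
def starGraph (n : ℕ) : SimpleGraph (Fin (n + 1)) :=
  SimpleGraph.fromRel (fun a _ => a = 0)

/-- The join `G₁ ⊕ G₂` of two graphs on disjoint vertex sets: all edges of `G₁`, all edges
of `G₂`, and all edges between `V(G₁)` and `V(G₂)`. -/
def joinGraph {V₁ V₂ : Type*} (G₁ : SimpleGraph V₁) (G₂ : SimpleGraph V₂) :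
    SimpleGraph (V₁ ⊕ V₂) :=
  SimpleGraph.fromRel (fun a b =>
    match a, b with
    | Sum.inl a, Sum.inl b => G₁.Adj a b
    | Sum.inr a, Sum.inr b => G₂.Adj a b
    | Sum.inl _, Sum.inr _ => True
    | _, _ => False)


lemma star_adj (n : ℕ) (a b : Fin (n+1)) :
    (_root_.starGraph n).Adj a b ↔ a ≠ b ∧ (a = 0 ∨ b = 0) := by
  simp [_root_.starGraph, SimpleGraph.fromRel_adj]


lemma myc_adj_LL (n : ℕ) (a b : Fin (n+1)) :
    (mycielskian (_root_.starGraph n)).Adj (Sum.inl a) (Sum.inl b) ↔ a ≠ b ∧ (a = 0 ∨ b = 0) := by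
  simp [mycielskian, SimpleGraph.fromRel_adj, star_adj]
  tauto


lemma myc_adj_LM (n : ℕ) (a b : Fin (n+1)) :
    (mycielskian (_root_.starGraph n)).Adj (Sum.inl a) (Sum.inr (Sum.inl b)) ↔ a ≠ b ∧ (a = 0 ∨ b = 0) := by
  simp [mycielskian, SimpleGraph.fromRel_adj, star_adj]

lemma myc_adj_LW (n : ℕ) (a : Fin (n+1)) (x : Unit) :
    ¬ (mycielskian (_root_.starGraph n)).Adj (Sum.inl a) (Sum.inr (Sum.inr x)) := by
  simp [mycielskian, SimpleGraph.fromRel_adj]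

lemma myc_adj_MM (n : ℕ) (a b : Fin (n+1)) :
    ¬ (mycielskian (_root_.starGraph n)).Adj (Sum.inr (Sum.inl a)) (Sum.inr (Sum.inl b)) := by
  simp [mycielskian, SimpleGraph.fromRel_adj]

lemma myc_adj_MW (n : ℕ) (a : Fin (n+1)) (x : Unit) :
    (mycielskian (_root_.starGraph n)).Adj (Sum.inr (Sum.inl a)) (Sum.inr (Sum.inr x)) := by
  simp [mycielskian, SimpleGraph.fromRel_adj]

lemma myc_adj_ML (n : ℕ) (a b : Fin (n+1)) :
    (mycielskian (_root_.starGraph n)).Adj (Sum.inr (Sum.inl a)) (Sum.inl b) ↔ b ≠ a ∧ (b = 0 ∨ a = 0) := by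
  rw [SimpleGraph.adj_comm]; exact myc_adj_LM n b a

lemma myc_adj_WL (n : ℕ) (a : Fin (n+1)) (x : Unit) :
    ¬ (mycielskian (_root_.starGraph n)).Adj (Sum.inr (Sum.inr x)) (Sum.inl a) := by
  rw [SimpleGraph.adj_comm]; exact myc_adj_LW n a x

lemma myc_adj_WM (n : ℕ) (a : Fin (n+1)) (x : Unit) :
    (mycielskian (_root_.starGraph n)).Adj (Sum.inr (Sum.inr x)) (Sum.inr (Sum.inl a)) := by
  rw [SimpleGraph.adj_comm]; exact myc_adj_MW n a x

lemma myc_adj_WW (n : ℕ) (x y : Unit) :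
    ¬ (mycielskian (_root_.starGraph n)).Adj (Sum.inr (Sum.inr x)) (Sum.inr (Sum.inr y)) := by
  simp [mycielskian, SimpleGraph.fromRel_adj]

lemma myc_common (n : ℕ) (hn : 2 ≤ n) (u v : Fin (n+1) ⊕ Fin (n+1) ⊕ Unit)
    (huv : u ≠ v) (hna : ¬ (mycielskian (_root_.starGraph n)).Adj u v) :
    ∃ x, (mycielskian (_root_.starGraph n)).Adj u x ∧ (mycielskian (_root_.starGraph n)).Adj x v := by
  have h1 : (⟨1, by omega⟩ : Fin (n+1)) ≠ 0 := by
    intro h; rw [Fin.ext_iff] at h; simp at h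
  rcases u with a | a | a <;> rcases v with b | b | b
  · -- L L
    simp only [ne_eq, Sum.inl.injEq] at huv
    rw [myc_adj_LL] at hna; push_neg at hna
    obtain ⟨ha, hb⟩ := hna huv
    exact ⟨Sum.inl 0, (myc_adj_LL n a 0).mpr ⟨ha, Or.inr rfl⟩,
      (myc_adj_LL n 0 b).mpr ⟨fun h => hb h.symm, Or.inl rfl⟩⟩
  · -- L M
    rw [myc_adj_LM] at hna; push_neg at hna
    by_cases ha : a = 0
    · have hb : b = 0 := by
        by_contra hb
        exact (hna (fun h => hb (ha ▸ h.symm))).1 ha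
      subst ha; subst hb
      refine ⟨Sum.inl ⟨1, by omega⟩, (myc_adj_LL n 0 _).mpr ⟨fun h => h1 h.symm, Or.inl rfl⟩,
        (myc_adj_LM n _ 0).mpr ⟨h1, Or.inr rfl⟩⟩
    · have hb : b ≠ 0 := by
        intro hb0
        exact (hna (hb0 ▸ ha)).2 hb0
      exact ⟨Sum.inl 0, (myc_adj_LL n a 0).mpr ⟨ha, Or.inr rfl⟩,
        (myc_adj_LM n 0 b).mpr ⟨fun h => hb h.symm, Or.inl rfl⟩⟩
  · -- L W
    by_cases ha : a = 0
    · subst ha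
      exact ⟨Sum.inr (Sum.inl ⟨1, by omega⟩), (myc_adj_LM n 0 _).mpr ⟨fun h => h1 h.symm, Or.inl rfl⟩,
        myc_adj_MW n _ b⟩
    · exact ⟨Sum.inr (Sum.inl 0), (myc_adj_LM n a 0).mpr ⟨ha, Or.inr rfl⟩, myc_adj_MW n 0 b⟩
  · -- M L
    rw [myc_adj_ML] at hna; push_neg at hna
    by_cases hb : b = 0
    · have ha : a = 0 := by
        by_contra ha
        exact (hna (fun h => ha (hb ▸ h.symm))).1 hb
      subst ha; subst hb
      exact ⟨Sum.inl ⟨1, by omega⟩, (myc_adj_ML n 0 _).mpr ⟨h1, Or.inr rfl⟩,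
        (myc_adj_LL n _ 0).mpr ⟨h1, Or.inr rfl⟩⟩
    · have ha : a ≠ 0 := by
        intro ha0
        exact (hna (ha0 ▸ hb)).2 ha0
      exact ⟨Sum.inl 0, (myc_adj_ML n a 0).mpr ⟨fun h => ha h.symm, Or.inl rfl⟩,
        (myc_adj_LL n 0 b).mpr ⟨fun h => hb h.symm, Or.inl rfl⟩⟩
  · -- M M
    exact ⟨Sum.inr (Sum.inr ()), myc_adj_MW n a (), myc_adj_WM n b ()⟩
  · -- M W
    exact absurd (myc_adj_MW n a b) hna
  · -- W L
    by_cases hb : b = 0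
    · subst hb
      exact ⟨Sum.inr (Sum.inl ⟨1, by omega⟩), myc_adj_WM n _ a,
        (myc_adj_ML n _ 0).mpr ⟨fun h => h1 h.symm, Or.inl rfl⟩⟩
    · exact ⟨Sum.inr (Sum.inl 0), myc_adj_WM n 0 a, (myc_adj_ML n 0 b).mpr ⟨hb, Or.inr rfl⟩⟩
  · -- W M
    exact absurd (myc_adj_WM n b a) hna
  · -- W W
    exact absurd (by cases a; cases b; rfl) huv

open Classical in
lemma myc_dist (n : ℕ) (hn : 2 ≤ n) (u v : Fin (n+1) ⊕ Fin (n+1) ⊕ Unit) :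
    (mycielskian (_root_.starGraph n)).dist u v =
      if u = v then 0 else if (mycielskian (_root_.starGraph n)).Adj u v then 1 else 2 := by
  classical
  split_ifs with h1 h2
  · subst h1; exact SimpleGraph.dist_self
  · exact SimpleGraph.dist_eq_one_iff_adj.mpr h2
  · obtain ⟨x, hx1, hx2⟩ := myc_common n hn u v h1 h2
    have hw : ((SimpleGraph.Walk.cons hx1 (SimpleGraph.Walk.cons hx2 SimpleGraph.Walk.nil)) :
        (mycielskian (_root_.starGraph n)).Walk u v).length = 2 := rfl
    have hle := SimpleGraph.dist_le ((SimpleGraph.Walk.cons hx1 (SimpleGraph.Walk.cons hx2 SimpleGraph.Walk.nil)))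
    rw [hw] at hle
    have hr : (mycielskian (_root_.starGraph n)).Reachable u v :=
      ⟨SimpleGraph.Walk.cons hx1 (SimpleGraph.Walk.cons hx2 SimpleGraph.Walk.nil)⟩
    have h0 : (mycielskian (_root_.starGraph n)).dist u v ≠ 0 := by
      exact fun h => h1 (hr.dist_eq_zero_iff.mp h)
    have hne1 : (mycielskian (_root_.starGraph n)).dist u v ≠ 1 :=
      fun h => h2 (SimpleGraph.dist_eq_one_iff_adj.mp h)
    omega

lemma sum_fin_ite {m : ℕ} (c : Fin (m+1)) (X Y : ℚ) :
    ∑ a : Fin (m+1), (if a = c then X else Y) = X + m * Y := by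
  have h : ∀ a : Fin (m+1), (if a = c then X else Y) = Y + (if a = c then X - Y else 0) := by
    intro a; by_cases h : a = c <;> simp [h]
  rw [Finset.sum_congr rfl fun a _ => h a, Finset.sum_add_distrib, Finset.sum_const,
    Finset.sum_ite_eq' Finset.univ c fun _ => X - Y]
  simp [Finset.card_univ]
  ring

lemma sum_starpair (n : ℕ) :
    ∑ a : Fin (n+1), ∑ b : Fin (n+1), (if a ≠ b ∧ (a = 0 ∨ b = 0) then (1:ℚ) else 0) = 2*n := by
  have inner : ∀ a : Fin (n+1),
      (∑ b : Fin (n+1), (if a ≠ b ∧ (a = 0 ∨ b = 0) then (1:ℚ) else 0)) = if a = 0 then (n:ℚ) else 1 := by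
    intro a
    by_cases ha : a = 0
    · subst ha
      have h : ∀ b : Fin (n+1),
          (if (0:Fin (n+1)) ≠ b ∧ ((0:Fin (n+1)) = 0 ∨ b = 0) then (1:ℚ) else 0) = (if b = 0 then 0 else 1) := by
        intro b; by_cases hb : b = 0 <;> simp [hb, Ne, eq_comm]
      rw [Finset.sum_congr rfl fun b _ => h b, sum_fin_ite]; simp
    · have h : ∀ b : Fin (n+1),
          (if a ≠ b ∧ (a = 0 ∨ b = 0) then (1:ℚ) else 0) = (if b = 0 then 1 else 0) := by
        intro b; by_cases hb : b = 0 <;> simp [hb, ha]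
      rw [Finset.sum_congr rfl fun b _ => h b, sum_fin_ite]; simp [ha]
  rw [Finset.sum_congr rfl fun a _ => inner a, sum_fin_ite]; ring

lemma sum_starpair' (n : ℕ) :
    ∑ a : Fin (n+1), ∑ b : Fin (n+1), (if b ≠ a ∧ (b = 0 ∨ a = 0) then (1:ℚ) else 0) = 2*n := by
  rw [Finset.sum_comm]; exact sum_starpair n

lemma adj_count (n : ℕ)
    (inst : ∀ u v : Fin (n+1) ⊕ Fin (n+1) ⊕ Unit, Decidable ((mycielskian (_root_.starGraph n)).Adj u v)) :
    ∑ u : Fin (n+1) ⊕ Fin (n+1) ⊕ Unit, ∑ v : Fin (n+1) ⊕ Fin (n+1) ⊕ Unit,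
      (@ite ℚ ((mycielskian (_root_.starGraph n)).Adj u v) (inst u v) 1 0) = 8*n + 2 := by
  simp only [Fintype.sum_sum_type, myc_adj_LL, myc_adj_LM, myc_adj_LW, myc_adj_ML,
    myc_adj_MM, myc_adj_MW, myc_adj_WL, myc_adj_WM, myc_adj_WW,
    if_true, if_false, Finset.sum_const_zero, Finset.sum_const, Finset.card_univ,
    Fintype.card_fin, Fintype.card_unit, Fintype.sum_unique, add_zero, zero_add,
    one_smul, nsmul_eq_mul, mul_one]
  rw [Finset.sum_add_distrib, Finset.sum_add_distrib, sum_starpair, sum_starpair']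
  simp [Finset.sum_const, Finset.card_univ]
  ring

lemma card_MV (n : ℕ) : Fintype.card (Fin (n+1) ⊕ Fin (n+1) ⊕ Unit) = 2*n+3 := by
  simp [Fintype.card_sum]; omega

lemma closeness_eval (n : ℕ) (hn : 2 ≤ n) :
    closeness (mycielskian (_root_.starGraph n)) = (16 * (n : ℚ)^2 + 72*n + 32)/16 := by
  classical
  have key : closeness (mycielskian (_root_.starGraph n))
      = ∑ u : Fin (n+1) ⊕ Fin (n+1) ⊕ Unit, ∑ v : Fin (n+1) ⊕ Fin (n+1) ⊕ Unit,
        ((1:ℚ)/4 - (if v = u then (1:ℚ)/4 else 0)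
          + (if (mycielskian (_root_.starGraph n)).Adj u v then (1:ℚ)/4 else 0)) := by
    unfold closeness
    refine Fintype.sum_congr _ _ fun u => ?_
    refine Fintype.sum_congr _ _ fun v => ?_
    by_cases h : v = u
    · rw [if_pos h, if_pos h,
        if_neg (fun hadj => (mycielskian (_root_.starGraph n)).irrefl (h ▸ hadj))]
      norm_num
    · rw [if_neg h, if_neg h, myc_dist n hn u v, if_neg (fun e => h e.symm)]
      by_cases h2 : (mycielskian (_root_.starGraph n)).Adj u v
      · rw [if_pos h2, if_pos h2]; norm_num
      · rw [if_neg h2, if_neg h2]; norm_num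
  rw [key]
  have hA0 : (∑ u : Fin (n+1) ⊕ Fin (n+1) ⊕ Unit, ∑ v : Fin (n+1) ⊕ Fin (n+1) ⊕ Unit,
      (if (mycielskian (_root_.starGraph n)).Adj u v then (1:ℚ) else 0)) = 8*n + 2 := adj_count n _
  have h4 : ∀ u v : Fin (n+1) ⊕ Fin (n+1) ⊕ Unit,
      (if (mycielskian (_root_.starGraph n)).Adj u v then (1:ℚ)/4 else 0)
      = (if (mycielskian (_root_.starGraph n)).Adj u v then (1:ℚ) else 0)/4 := by
    intro u v; split_ifs <;> norm_num
  have hD : ∀ u : Fin (n+1) ⊕ Fin (n+1) ⊕ Unit,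
      ∑ v : Fin (n+1) ⊕ Fin (n+1) ⊕ Unit, (if v = u then (1:ℚ)/4 else 0) = 1/4 := by
    intro u
    rw [Finset.sum_ite_eq' Finset.univ u (fun _ => (1:ℚ)/4)]
    simp
  simp only [h4, Finset.sum_add_distrib, Finset.sum_sub_distrib, ← Finset.sum_div, hA0,
    Finset.sum_congr rfl fun u (_ : u ∈ Finset.univ) => hD u, Finset.sum_const,
    Finset.card_univ, card_MV]
  ring

lemma walk_len_two {V : Type*} {G : SimpleGraph V} {u v : V} (p : G.Walk u v) (hp : p.length = 2) :
    ∃ (x : V) (h1 : G.Adj u x) (h2 : G.Adj x v),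
      p = SimpleGraph.Walk.cons h1 (SimpleGraph.Walk.cons h2 SimpleGraph.Walk.nil) := by
  cases p with
  | nil => simp at hp
  | cons h q =>
    cases q with
    | nil => simp at hp
    | cons h' q' =>
      cases q' with
      | nil => exact ⟨_, h, h', rfl⟩
      | cons h'' q'' => simp [SimpleGraph.Walk.length_cons] at hp

lemma walk_len_one {V : Type*} {G : SimpleGraph V} {u v : V} (p : G.Walk u v) (hp : p.length = 1) :
    p.support = [u, v] := by
  cases p with
  | nil => simp at hp
  | cons h q =>
    cases q with
    | nil => simp
    | cons h' q' => simp [SimpleGraph.Walk.length_cons] at hp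

lemma walk_two_getVert {V : Type*} {G : SimpleGraph V} {u v : V} (p : G.Walk u v)
    (hp : p.length = 2) :
    G.Adj u (p.getVert 1) ∧ G.Adj (p.getVert 1) v ∧ p.support = [u, p.getVert 1, v] := by
  obtain ⟨x, h1, h2, rfl⟩ := walk_len_two p hp
  simp [SimpleGraph.Walk.support_cons, SimpleGraph.Walk.getVert_cons_succ]
  exact ⟨h1, h2⟩

lemma btw_pair_two {V : Type*} [Fintype V] [DecidableEq V] (G : SimpleGraph V)
    [DecidableRel G.Adj] (u v : V) (huv : u ≠ v) (hd : G.dist u v = 2) :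
    ∑ w : V, (if u ≠ v ∧ u ≠ w ∧ v ≠ w then (numSPthrough G w u v : ℚ) / (numSP G u v) else 0)
      = 1 := by
  have hσ : numSP G u v = Fintype.card {p : G.Walk u v // p.length = 2} := by
    rw [numSP, hd, Nat.card_eq_fintype_card]
  have hσpos : 0 < Fintype.card {p : G.Walk u v // p.length = 2} := by
    have hr : G.Reachable u v := SimpleGraph.Reachable.of_dist_ne_zero (by omega)
    obtain ⟨p, hp⟩ := hr.exists_walk_length_eq_dist
    rw [hd] at hp
    exact Fintype.card_pos_iff.mpr ⟨⟨p, hp⟩⟩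
  have hmid : ∀ q : {p : G.Walk u v // p.length = 2}, q.1.getVert 1 ≠ u ∧ q.1.getVert 1 ≠ v := by
    intro q
    obtain ⟨ha, hb, _⟩ := walk_two_getVert q.1 q.2
    exact ⟨ha.ne', hb.ne⟩
  have hfib : ∀ w : V, u ≠ w → v ≠ w →
      (numSPthrough G w u v)
        = Fintype.card {q : {p : G.Walk u v // p.length = 2} // q.1.getVert 1 = w} := by
    intro w hu hv
    rw [numSPthrough, ← Nat.card_eq_fintype_card]
    apply Nat.card_congr
    refine (Equiv.subtypeEquivRight fun p => ?_).trans
      (Equiv.subtypeSubtypeEquivSubtypeInter (fun p : G.Walk u v => p.length = 2)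
        (fun p => p.getVert 1 = w)).symm
    rw [hd]
    constructor
    · rintro ⟨hl, hw⟩
      refine ⟨hl, ?_⟩
      obtain ⟨-, -, hs⟩ := walk_two_getVert p hl
      rw [hs] at hw
      simp at hw
      rcases hw with h | h | h
      · exact absurd h.symm hu
      · exact h.symm
      · exact absurd h.symm hv
    · rintro ⟨hl, hw⟩
      refine ⟨hl, ?_⟩
      obtain ⟨-, -, hs⟩ := walk_two_getVert p hl
      rw [hs, hw]
      simp
  have hfibsum : ∑ w : V, Fintype.card {q : {p : G.Walk u v // p.length = 2} // q.1.getVert 1 = w}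
      = Fintype.card {p : G.Walk u v // p.length = 2} := by
    rw [← Fintype.card_sigma]
    exact Fintype.card_congr
      (Equiv.sigmaFiberEquiv fun q : {p : G.Walk u v // p.length = 2} => q.1.getVert 1)
  have hpt : ∀ w : V,
      (if u ≠ v ∧ u ≠ w ∧ v ≠ w then (numSPthrough G w u v : ℚ) / (numSP G u v) else 0)
      = (Fintype.card {q : {p : G.Walk u v // p.length = 2} // q.1.getVert 1 = w} : ℚ)
          / (numSP G u v) := by
    intro w
    by_cases h : u ≠ v ∧ u ≠ w ∧ v ≠ w
    · rw [if_pos h, hfib w h.2.1 h.2.2]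
    · rw [if_neg h]
      push_neg at h
      by_cases hw : u = w
      · have : IsEmpty {q : {p : G.Walk u v // p.length = 2} // q.1.getVert 1 = w} :=
          ⟨fun q => (hmid q.1).1 (q.2.trans hw.symm)⟩
        rw [Fintype.card_eq_zero]
        simp
      · have hvw : v = w := h huv hw
        have : IsEmpty {q : {p : G.Walk u v // p.length = 2} // q.1.getVert 1 = w} :=
          ⟨fun q => (hmid q.1).2 (q.2.trans hvw.symm)⟩
        rw [Fintype.card_eq_zero]
        simp
  have hTne : ((Fintype.card {p : G.Walk u v // p.length = 2} : ℚ)) ≠ 0 := by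
    exact_mod_cast hσpos.ne'
  rw [Finset.sum_congr rfl fun w _ => hpt w, ← Finset.sum_div, ← Nat.cast_sum, hfibsum, hσ,
    div_self hTne]

lemma btw_eval (n : ℕ) (hn : 2 ≤ n) :
    btw (mycielskian (_root_.starGraph n)) = (2*(n:ℚ)^2 + n + 2)/(2*n+3) := by
  classical
  have key : (∑ w : Fin (n+1) ⊕ Fin (n+1) ⊕ Unit, btwVertex (mycielskian (_root_.starGraph n)) w)
      = (∑ u : Fin (n+1) ⊕ Fin (n+1) ⊕ Unit, ∑ v : Fin (n+1) ⊕ Fin (n+1) ⊕ Unit,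
          (if u = v then (0:ℚ) else if (mycielskian (_root_.starGraph n)).Adj u v then 0 else 1))/2 := by
    unfold btwVertex
    rw [← Finset.sum_div]
    congr 1
    rw [Finset.sum_comm]
    refine Fintype.sum_congr _ _ fun u => ?_
    rw [Finset.sum_comm]
    refine Fintype.sum_congr _ _ fun v => ?_
    by_cases huv : u = v
    · rw [if_pos huv]
      apply Finset.sum_eq_zero
      intro w _
      rw [if_neg (by simp [huv])]
    · rw [if_neg huv]
      by_cases hadj : (mycielskian (_root_.starGraph n)).Adj u v
      · rw [if_pos hadj]
        apply Finset.sum_eq_zero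
        intro w _
        by_cases hcond : u ≠ v ∧ u ≠ w ∧ v ≠ w
        · rw [if_pos hcond]
          have hempty : IsEmpty {p : (mycielskian (_root_.starGraph n)).Walk u v //
              p.length = (mycielskian (_root_.starGraph n)).dist u v ∧ w ∈ p.support} := by
            refine ⟨fun q => ?_⟩
            obtain ⟨p, hl, hw⟩ := q
            rw [SimpleGraph.dist_eq_one_iff_adj.mpr hadj] at hl
            rw [walk_len_one p hl] at hw
            simp at hw
            rcases hw with h | h
            · exact hcond.2.1 h.symm
            · exact hcond.2.2 h.symm
          have hzero : numSPthrough (mycielskian (_root_.starGraph n)) w u v = 0 := by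
            haveI := hempty
            simp [numSPthrough]
          rw [hzero]
          norm_num
        · rw [if_neg hcond]
      · rw [if_neg hadj]
        refine @btw_pair_two _ _ (Classical.decEq _) (mycielskian (_root_.starGraph n))
          (fun _ _ => Classical.propDecidable _) u v huv ?_
        rw [myc_dist n hn u v, if_neg huv, if_neg hadj]
  unfold _root_.btw
  rw [key]
  have hpt : ∀ u v : Fin (n+1) ⊕ Fin (n+1) ⊕ Unit,
      (if u = v then (0:ℚ) else if (mycielskian (_root_.starGraph n)).Adj u v then 0 else 1)
      = 1 - (if u = v then (1:ℚ) else 0) - (if (mycielskian (_root_.starGraph n)).Adj u v then (1:ℚ) else 0) := by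
    intro u v
    by_cases h : u = v
    · rw [if_pos h, if_pos h,
        if_neg (fun hadj => (mycielskian (_root_.starGraph n)).irrefl (h ▸ hadj))]
      norm_num
    · rw [if_neg h, if_neg h]
      by_cases h2 : (mycielskian (_root_.starGraph n)).Adj u v
      · rw [if_pos h2, if_pos h2]; norm_num
      · rw [if_neg h2, if_neg h2]; norm_num
  have hA0 : (∑ u : Fin (n+1) ⊕ Fin (n+1) ⊕ Unit, ∑ v : Fin (n+1) ⊕ Fin (n+1) ⊕ Unit,
      (if (mycielskian (_root_.starGraph n)).Adj u v then (1:ℚ) else 0)) = 8*n + 2 := adj_count n _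
  have hD : ∀ u : Fin (n+1) ⊕ Fin (n+1) ⊕ Unit,
      ∑ v : Fin (n+1) ⊕ Fin (n+1) ⊕ Unit, (if u = v then (1:ℚ) else 0) = 1 := by
    intro u
    rw [Finset.sum_ite_eq Finset.univ u (fun _ => (1:ℚ))]
    simp
  simp only [hpt, Finset.sum_sub_distrib, hA0,
    Finset.sum_congr rfl fun u (_ : u ∈ Finset.univ) => hD u, Finset.sum_const,
    Finset.card_univ, card_MV]
  have h3 : ((2*n+3 : ℕ) : ℚ) ≠ 0 := by positivity
  rw [div_div]
  rw [div_eq_div_iff (by positivity) (by positivity)]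
  push_cast
  ring

/-- For `n ≥ 2`, the Mycielskian of the star `S_n` satisfies
`C(μ(S_n)) = (16n² + 72n + 32)/16` and `B⁻(μ(S_n)) = (2n² + n + 2)/(2n+3)`. -/
theorem stmt_18 (n : ℕ) (hn : 2 ≤ n) :
    closeness (mycielskian (_root_.starGraph n)) =
      (16 * (n : ℚ) ^ 2 + 72 * n + 32) / 16 ∧
    btw (mycielskian (_root_.starGraph n)) =
      (2 * (n : ℚ) ^ 2 + n + 2) / (2 * n + 3) := by
  exact ⟨closeness_eval n hn, btw_eval n hn⟩
end

section
/- For every integer n ≥ 2, C(μ(S_n)) − C(μ(P_n)) = (7n² − 23n + 18)/16, and this quantity is nonnegative; in particular C(μ(S_2)) = C(μ(P_2)), and C(μ(S_n)) > C(μ(P_n)) for all n > 2. -/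
open SimpleGraph Polynomial Finset

namespace Aux
variable {V : Type*} {G : SimpleGraph V}
@[simp] lemma myc_adj_vv {a b : V} :
    (mycielskian G).Adj (Sum.inl a) (Sum.inl b) ↔ G.Adj a b := by
  simp only [mycielskian, fromRel_adj]
  constructor
  · rintro ⟨-, h | h⟩
    · exact h
    · exact h.symm
  · intro h
    exact ⟨by simp [h.ne], Or.inl h⟩
@[simp] lemma myc_adj_vu {a b : V} :
    (mycielskian G).Adj (Sum.inl a) (Sum.inr (Sum.inl b)) ↔ G.Adj a b := by
  simp [mycielskian, fromRel_adj]
@[simp] lemma myc_adj_uv {a b : V} :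
    (mycielskian G).Adj (Sum.inr (Sum.inl a)) (Sum.inl b) ↔ G.Adj b a := by
  simp [mycielskian, fromRel_adj]
@[simp] lemma myc_adj_uu {a b : V} :
    ¬ (mycielskian G).Adj (Sum.inr (Sum.inl a)) (Sum.inr (Sum.inl b)) := by
  simp [mycielskian, fromRel_adj]
@[simp] lemma myc_adj_uw {a : V} {c : Unit} :
    (mycielskian G).Adj (Sum.inr (Sum.inl a)) (Sum.inr (Sum.inr c)) := by
  simp [mycielskian, fromRel_adj]
@[simp] lemma myc_adj_wu {a : V} {c : Unit} :
    (mycielskian G).Adj (Sum.inr (Sum.inr c)) (Sum.inr (Sum.inl a)) := by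
  simp [mycielskian, fromRel_adj]
@[simp] lemma myc_adj_vw {a : V} {c : Unit} :
    ¬ (mycielskian G).Adj (Sum.inl a) (Sum.inr (Sum.inr c)) := by
  simp [mycielskian, fromRel_adj]
@[simp] lemma myc_adj_wv {a : V} {c : Unit} :
    ¬ (mycielskian G).Adj (Sum.inr (Sum.inr c)) (Sum.inl a) := by
  simp [mycielskian, fromRel_adj]
@[simp] lemma myc_adj_ww {c c' : Unit} :
    ¬ (mycielskian G).Adj (Sum.inr (Sum.inr c)) (Sum.inr (Sum.inr c')) := by
  simp [mycielskian, fromRel_adj]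
@[simp] lemma star_adj {n : ℕ} {a b : Fin (n+1)} :
    (_root_.starGraph n).Adj a b ↔ a ≠ b ∧ (a = 0 ∨ b = 0) := by
  simp [_root_.starGraph, fromRel_adj]
lemma dist_eq' {u v : V} {d : ℕ} (p : G.Walk u v) (hp : p.length = d)
    (h : ∀ q : G.Walk u v, d ≤ q.length) : G.dist u v = d := by
  refine le_antisymm (hp ▸ G.dist_le p) ?_
  obtain ⟨q, hq⟩ := p.reachable.exists_walk_length_eq_dist
  exact hq ▸ h q
lemma two_le_walk_length {u v : V} (hne : u ≠ v) (hadj : ¬ G.Adj u v) (q : G.Walk u v) :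
    2 ≤ q.length := by
  rcases Nat.lt_or_ge q.length 2 with h | h
  · interval_cases h' : q.length
    · exact absurd (SimpleGraph.Walk.eq_of_length_eq_zero h') hne
    · exact absurd (SimpleGraph.Walk.adj_of_length_eq_one h') hadj
  · exact h
lemma length_ge_through [DecidableEq V] {x y w : V} (p : G.Walk x y) (hw : w ∈ p.support) :
    G.dist x w + G.dist w y ≤ p.length := by
  conv_rhs => rw [← p.take_spec hw]
  rw [SimpleGraph.Walk.length_append]
  exact Nat.add_le_add (G.dist_le _) (G.dist_le _)

/-! ### Star graph Mycielskian -/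

variable {n : ℕ}

lemma one_ne_zero' (hn : 2 ≤ n) : (1 : Fin (n+1)) ≠ 0 := by
  intro h
  rw [Fin.ext_iff, Fin.val_one', Fin.val_zero, Nat.mod_eq_of_lt (by omega)] at h
  omega

lemma starM_common (hn : 2 ≤ n) (x y : Fin (n+1) ⊕ Fin (n+1) ⊕ Unit) (hne : x ≠ y)
    (hadj : ¬ (mycielskian (_root_.starGraph n)).Adj x y) :
    ∃ z, (mycielskian (_root_.starGraph n)).Adj x z ∧ (mycielskian (_root_.starGraph n)).Adj z y := by
  have h1 : (1 : Fin (n+1)) ≠ 0 := one_ne_zero' hn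
  rcases x with a | a | c <;> rcases y with b | b | c'
  · -- v v
    simp only [myc_adj_vv, star_adj] at hadj
    have hab : a ≠ b := fun h => hne (by rw [h])
    have ha : a ≠ 0 := fun h => hadj ⟨hab, Or.inl h⟩
    have hb : b ≠ 0 := fun h => hadj ⟨hab, Or.inr h⟩
    exact ⟨Sum.inl 0, by simp [star_adj, ha, hb, Ne.symm hb]⟩
  · -- v u
    simp only [myc_adj_vu, star_adj] at hadj
    by_cases ha : a = 0
    · have hb : b = 0 := by
        by_contra hb
        exact hadj ⟨fun h => hb (h ▸ ha), Or.inl ha⟩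
      subst ha; subst hb
      exact ⟨Sum.inl 1, by simp [star_adj, h1, Ne.symm h1]⟩
    · have hb : b ≠ 0 := by
        rintro rfl
        exact hadj ⟨ha, Or.inr rfl⟩
      exact ⟨Sum.inl 0, by simp [star_adj, ha, Ne.symm hb]⟩
  · -- v w
    refine ⟨Sum.inr (Sum.inl (if a = 0 then 1 else 0)), ?_, by simp⟩
    by_cases ha : a = 0 <;> simp [star_adj, ha, h1, Ne.symm h1]
  · -- u v
    simp only [myc_adj_uv, star_adj] at hadj
    by_cases hb : b = 0
    · have ha : a = 0 := by
        by_contra ha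
        exact hadj ⟨fun h => ha (h ▸ hb), Or.inl hb⟩
      subst ha; subst hb
      exact ⟨Sum.inl 1, by simp [star_adj, h1, Ne.symm h1]⟩
    · have ha : a ≠ 0 := by
        rintro rfl
        exact hadj ⟨hb, Or.inr rfl⟩
      exact ⟨Sum.inl 0, by simp [star_adj, hb, Ne.symm hb, ha, Ne.symm ha]⟩
  · -- u u
    exact ⟨Sum.inr (Sum.inr ()), by simp⟩
  · -- u w
    exact absurd myc_adj_uw hadj
  · -- w v
    refine ⟨Sum.inr (Sum.inl (if b = 0 then 1 else 0)), by simp, ?_⟩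
    by_cases hb : b = 0 <;> simp [star_adj, hb, h1, Ne.symm h1]
  · -- w u
    exact absurd myc_adj_wu hadj
  · -- w w
    exact absurd (by rfl) hne

lemma starM_dist_two (hn : 2 ≤ n) {x y : Fin (n+1) ⊕ Fin (n+1) ⊕ Unit} (hne : x ≠ y)
    (h : ¬ (mycielskian (_root_.starGraph n)).Adj x y) :
    (mycielskian (_root_.starGraph n)).dist x y = 2 := by
  obtain ⟨z, h1, h2⟩ := starM_common hn x y hne h
  exact dist_eq' (Walk.cons h1 (Walk.cons h2 Walk.nil)) rfl (two_le_walk_length hne h)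

open Classical in
lemma sum_star_adj (n : ℕ) :
    ∑ a : Fin (n+1), ∑ b : Fin (n+1),
      (if (_root_.starGraph n).Adj a b then (1:ℚ) else 0) = 2*n := by
  have hrow : ∀ a : Fin (n+1), (∑ b : Fin (n+1),
      (if (_root_.starGraph n).Adj a b then (1:ℚ) else 0)) = 1 + (if a = 0 then (n:ℚ) - 1 else 0) := by
    intro a
    by_cases ha : a = 0
    · subst ha
      rw [if_pos rfl]
      have h1 : ∀ b : Fin (n+1), (if (_root_.starGraph n).Adj 0 b then (1:ℚ) else 0)
          = 1 - (if b = 0 then 1 else 0) := by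
        intro b
        by_cases hb : b = 0 <;> simp [star_adj, hb, Ne.symm]
      rw [Finset.sum_congr rfl (fun b _ => h1 b), Finset.sum_sub_distrib,
        Finset.sum_ite_eq' univ (0 : Fin (n+1)) (fun _ => (1:ℚ))]
      simp
    · rw [if_neg ha]
      have h1 : ∀ b : Fin (n+1), (if (_root_.starGraph n).Adj a b then (1:ℚ) else 0)
          = (if b = 0 then 1 else 0) := by
        intro b
        by_cases hb : b = 0
        · subst hb; simp [star_adj, ha]
        · simp [star_adj, hb, ha]
      rw [Finset.sum_congr rfl (fun b _ => h1 b),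
        Finset.sum_ite_eq' univ (0 : Fin (n+1)) (fun _ => (1:ℚ))]
      simp
  rw [Finset.sum_congr rfl (fun a _ => hrow a), Finset.sum_add_distrib,
    Finset.sum_ite_eq' univ (0 : Fin (n+1)) (fun _ => (n:ℚ) - 1)]
  simp
  ring

open Classical in
lemma sum_mycS_adj (n : ℕ) :
    ∑ x : Fin (n+1) ⊕ Fin (n+1) ⊕ Unit, ∑ y : Fin (n+1) ⊕ Fin (n+1) ⊕ Unit,
      (if (mycielskian (_root_.starGraph n)).Adj x y then (1:ℚ) else 0) = 8*n+2 := by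
  simp only [Fintype.sum_sum_type]
  simp only [myc_adj_vv, myc_adj_vu, myc_adj_uv, myc_adj_uu, myc_adj_uw, myc_adj_wu,
    myc_adj_vw, myc_adj_wv, myc_adj_ww, if_true, if_false]
  simp only [Finset.sum_add_distrib, Finset.sum_const, Finset.card_univ, Fintype.card_fin,
    Fintype.card_unit, smul_zero, smul_eq_mul, mul_one, mul_zero, add_zero, zero_add, one_smul]
  rw [sum_star_adj n]
  rw [show (∑ x : Fin (n+1), ∑ y : Fin (n+1), if (_root_.starGraph n).Adj y x then (1:ℚ) else 0) = 2*n
      from (Finset.sum_comm).trans (sum_star_adj n)]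
  push_cast
  ring


open Classical in
lemma closenessS (n : ℕ) (hn : 2 ≤ n) :
    closeness (mycielskian (_root_.starGraph n)) = (2*(n:ℚ)^2 + 9*n + 4)/2 := by
  unfold closeness
  have hAdj : ∑ x : Fin (n+1) ⊕ Fin (n+1) ⊕ Unit, ∑ y : Fin (n+1) ⊕ Fin (n+1) ⊕ Unit,
      (if (mycielskian (_root_.starGraph n)).Adj x y then (1:ℚ)/4 else 0) = (8*n+2)/4 := by
    have h := sum_mycS_adj n
    have : ∀ x y : Fin (n+1) ⊕ Fin (n+1) ⊕ Unit,
        (if (mycielskian (_root_.starGraph n)).Adj x y then (1:ℚ)/4 else 0)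
        = 1/4 * (if (mycielskian (_root_.starGraph n)).Adj x y then (1:ℚ) else 0) := by
      intro x y; by_cases hxy : (mycielskian (_root_.starGraph n)).Adj x y <;> simp [hxy]
    rw [Finset.sum_congr rfl (fun x _ => Finset.sum_congr rfl (fun y _ => this x y))]
    simp only [← Finset.mul_sum]
    rw [h]
    ring
  calc _
      = ∑ x : Fin (n+1) ⊕ Fin (n+1) ⊕ Unit, ∑ y : Fin (n+1) ⊕ Fin (n+1) ⊕ Unit,
        (((1:ℚ)/4 - (if y = x then (1:ℚ)/4 else 0))
          + (if (mycielskian (_root_.starGraph n)).Adj x y then (1:ℚ)/4 else 0)) := by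
        refine Finset.sum_congr rfl fun x _ => Finset.sum_congr rfl fun y _ => ?_
        by_cases h : y = x
        · subst h; simp
        · rw [if_neg h, if_neg h]
          by_cases ha : (mycielskian (_root_.starGraph n)).Adj x y
          · rw [if_pos ha, dist_eq_one_iff_adj.mpr ha]
            norm_num
          · rw [if_neg ha, starM_dist_two hn (Ne.symm h) ha]
            norm_num
    _ = (2*(n:ℚ)^2 + 9*n + 4)/2 := by
        simp only [Finset.sum_add_distrib, Finset.sum_sub_distrib, hAdj]
        simp only [Finset.sum_ite_eq' Finset.univ, Finset.mem_univ, if_pos,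
          Finset.sum_const, Finset.card_univ, Fintype.card_sum, Fintype.card_fin,
          Fintype.card_unit, smul_eq_mul]
        push_cast
        ring

/-! ### Path graph Mycielskian : distances -/

lemma pAdj {m : ℕ} {i j : Fin m} (h : Nat.dist i.val j.val = 1) :
    (SimpleGraph.pathGraph m).Adj i j := by
  rw [pathGraph_adj]
  simp [Nat.dist] at h
  omega

lemma pAdj_iff {m : ℕ} {i j : Fin m} :
    (SimpleGraph.pathGraph m).Adj i j ↔ Nat.dist i.val j.val = 1 := by
  rw [pathGraph_adj]
  simp [Nat.dist]
  omega

lemma layer_walk {n : ℕ} : ∀ (k : ℕ) (i j : Fin (n+1)), i.val + k = j.val →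
    ∃ p : (mycielskian (pathGraph (n+1))).Walk (Sum.inl i) (Sum.inl j), p.length = k := by
  intro k
  induction k with
  | zero =>
    intro i j h
    obtain rfl : i = j := Fin.ext (by omega)
    exact ⟨Walk.nil, rfl⟩
  | succ k ih =>
    intro i j h
    have hi1 : i.val + 1 < n + 1 := by omega
    have hadj : (mycielskian (pathGraph (n+1))).Adj (Sum.inl i) (Sum.inl ⟨i.val + 1, hi1⟩) := by
      rw [myc_adj_vv]
      exact pAdj (by simp [Nat.dist])
    obtain ⟨p, hp⟩ := ih ⟨i.val + 1, hi1⟩ j (by simp; omega)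
    exact ⟨Walk.cons hadj p, by simp [hp]⟩

lemma layer_walk' {n : ℕ} (i j : Fin (n+1)) :
    ∃ p : (mycielskian (pathGraph (n+1))).Walk (Sum.inl i) (Sum.inl j),
      p.length = Nat.dist i.val j.val := by
  rcases le_total i.val j.val with h | h
  · obtain ⟨p, hp⟩ := layer_walk (j.val - i.val) i j (by omega)
    exact ⟨p, by rw [hp, Nat.dist_eq_sub_of_le h]⟩
  · obtain ⟨p, hp⟩ := layer_walk (i.val - j.val) j i (by omega)
    refine ⟨p.reverse, ?_⟩
    rw [Walk.length_reverse, hp, Nat.dist_comm, Nat.dist_eq_sub_of_le h]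

def nbr {n : ℕ} (i : Fin (n+1)) : Fin (n+1) :=
  if i.val = 0 then ⟨1 % (n+1), Nat.mod_lt _ (by omega)⟩ else ⟨i.val - 1, by omega⟩

lemma nbr_adj {n : ℕ} (hn : 1 ≤ n) (i : Fin (n+1)) :
    (SimpleGraph.pathGraph (n+1)).Adj (nbr i) i := by
  apply pAdj
  by_cases h : i.val = 0 <;>
    simp [nbr, h, Nat.dist, Nat.mod_eq_of_lt (show 1 < n+1 by omega)] <;> omega

lemma dist_uw {n : ℕ} (i : Fin (n+1)) :
    (mycielskian (pathGraph (n+1))).dist (Sum.inr (Sum.inl i)) (Sum.inr (Sum.inr ())) = 1 :=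
  dist_eq_one_iff_adj.mpr myc_adj_uw

lemma dist_vw {n : ℕ} (hn : 1 ≤ n) (i : Fin (n+1)) :
    (mycielskian (pathGraph (n+1))).dist (Sum.inl i) (Sum.inr (Sum.inr ())) = 2 := by
  refine dist_eq'
    (Walk.cons (myc_adj_vu.mpr (nbr_adj hn i).symm)
      (Walk.cons (myc_adj_uw (a := nbr i) (c := ())) Walk.nil)) rfl
    (two_le_walk_length (by simp) myc_adj_vw)

lemma dist_uu' {n : ℕ} (i j : Fin (n+1)) (hij : i ≠ j) :
    (mycielskian (pathGraph (n+1))).dist (Sum.inr (Sum.inl i)) (Sum.inr (Sum.inl j)) = 2 := by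
  refine dist_eq'
    (Walk.cons (myc_adj_uw (a := i) (c := ())) (Walk.cons (myc_adj_wu (a := j) (c := ())) Walk.nil)) rfl
    (two_le_walk_length (by simp [hij]) myc_adj_uu)

lemma dist_uv_same {n : ℕ} (hn : 1 ≤ n) (i : Fin (n+1)) :
    (mycielskian (pathGraph (n+1))).dist (Sum.inr (Sum.inl i)) (Sum.inl i) = 2 := by
  refine dist_eq'
    (Walk.cons (myc_adj_uv.mpr (nbr_adj hn i))
      (Walk.cons (myc_adj_vv.mpr (nbr_adj hn i)) Walk.nil)) rfl
    (two_le_walk_length (by simp) (by simp [pAdj_iff, Nat.dist_self]))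

def projV {n : ℕ} : Fin (n+1) ⊕ Fin (n+1) ⊕ Unit → ℕ :=
  Sum.elim Fin.val (Sum.elim Fin.val fun _ => 0)

lemma step_bound {n : ℕ} {x z : Fin (n+1) ⊕ Fin (n+1) ⊕ Unit}
    (h : (mycielskian (pathGraph (n+1))).Adj x z)
    (hx : x ≠ Sum.inr (Sum.inr ())) (hz : z ≠ Sum.inr (Sum.inr ())) :
    Nat.dist (projV x) (projV z) ≤ 1 := by
  rcases x with a | a | c <;> rcases z with b | b | c'
  · rw [myc_adj_vv, pAdj_iff] at h; simp [projV, h]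
  · rw [myc_adj_vu, pAdj_iff] at h; simp [projV, h]
  · exact absurd rfl hz
  · rw [myc_adj_uv, pAdj_iff] at h; simp [projV, Nat.dist_comm, h]
    rw [Nat.dist_comm, h]
  · exact absurd h myc_adj_uu
  · exact absurd rfl hz
  · exact absurd rfl hx
  · exact absurd rfl hx
  · exact absurd rfl hx

lemma noW_lb {n : ℕ} {x y : Fin (n+1) ⊕ Fin (n+1) ⊕ Unit}
    (p : (mycielskian (pathGraph (n+1))).Walk x y)
    (hw : Sum.inr (Sum.inr ()) ∉ p.support) :
    Nat.dist (projV x) (projV y) ≤ p.length := by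
  induction p with
  | nil => simp [Nat.dist_self]
  | @cons u z y h q ih =>
    rw [Walk.support_cons, List.mem_cons, not_or] at hw
    have hq : Sum.inr (Sum.inr ()) ∉ q.support := hw.2
    have hx : u ≠ Sum.inr (Sum.inr ()) := fun he => hw.1 he.symm
    have hz : z ≠ Sum.inr (Sum.inr ()) := fun he => hq (he ▸ q.start_mem_support)
    calc Nat.dist (projV u) (projV y)
        ≤ Nat.dist (projV u) (projV z) + Nat.dist (projV z) (projV y) :=
          Nat.dist.triangle_inequality _ _ _
      _ ≤ 1 + q.length := Nat.add_le_add (step_bound h hx hz) (ih hq)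
      _ = (Walk.cons h q).length := by rw [Walk.length_cons]; omega

lemma dist_vv' {n : ℕ} (hn : 1 ≤ n) (i j : Fin (n+1)) (hij : i ≠ j) :
    (mycielskian (pathGraph (n+1))).dist (Sum.inl i) (Sum.inl j)
      = min (Nat.dist i.val j.val) 4 := by
  classical
  have lb : ∀ q : (mycielskian (pathGraph (n+1))).Walk (Sum.inl i) (Sum.inl j),
      min (Nat.dist i.val j.val) 4 ≤ q.length := by
    intro q
    rcases em ((Sum.inr (Sum.inr ()) : Fin (n+1) ⊕ Fin (n+1) ⊕ Unit) ∈ q.support) with hw | hw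
    · have h := length_ge_through q hw
      rw [dist_vw hn i, SimpleGraph.dist_comm, dist_vw hn j] at h
      omega
    · have h := noW_lb q hw
      simp only [projV, Sum.elim_inl] at h
      omega
  rcases le_or_gt (Nat.dist i.val j.val) 4 with h4 | h4
  · obtain ⟨p, hp⟩ := layer_walk' i j
    exact dist_eq' p (by rw [hp]; omega) lb
  · refine dist_eq'
      (Walk.cons (myc_adj_vu.mpr (nbr_adj hn i).symm)
        (Walk.cons (myc_adj_uw (a := nbr i) (c := ()))
          (Walk.cons (myc_adj_wu (a := nbr j) (c := ()))
            (Walk.cons ((myc_adj_uv (a := nbr j) (b := j)).mpr (nbr_adj hn j).symm) Walk.nil)))) ?_ lb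
    simp
    omega

lemma dist_uv' {n : ℕ} (hn : 1 ≤ n) (i j : Fin (n+1)) (hij : i ≠ j) :
    (mycielskian (pathGraph (n+1))).dist (Sum.inr (Sum.inl i)) (Sum.inl j)
      = min (Nat.dist i.val j.val) 3 := by
  classical
  have lb : ∀ q : (mycielskian (pathGraph (n+1))).Walk (Sum.inr (Sum.inl i)) (Sum.inl j),
      min (Nat.dist i.val j.val) 3 ≤ q.length := by
    intro q
    rcases em ((Sum.inr (Sum.inr ()) : Fin (n+1) ⊕ Fin (n+1) ⊕ Unit) ∈ q.support) with hw | hw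
    · have h := length_ge_through q hw
      rw [dist_uw i, SimpleGraph.dist_comm, dist_vw hn j] at h
      omega
    · have h := noW_lb q hw
      simp only [projV, Sum.elim_inl, Sum.elim_inr] at h
      omega
  have hij' : i.val ≠ j.val := fun h => hij (Fin.ext h)
  rcases le_or_gt (Nat.dist i.val j.val) 3 with h3 | h3
  · rcases Nat.lt_or_ge i.val j.val with hlt | hge
    · have hd : Nat.dist i.val j.val = j.val - i.val := Nat.dist_eq_sub_of_le (le_of_lt hlt)
      have hi1 : i.val + 1 < n + 1 := by omega
      obtain ⟨p, hp⟩ := layer_walk (j.val - (i.val + 1)) ⟨i.val + 1, hi1⟩ j (by simp; omega)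
      have hadj : (mycielskian (pathGraph (n+1))).Adj (Sum.inr (Sum.inl i))
          (Sum.inl ⟨i.val + 1, hi1⟩) := myc_adj_uv.mpr (pAdj (by simp [Nat.dist]))
      refine dist_eq' (Walk.cons hadj p) ?_ lb
      rw [Walk.length_cons, hp, hd]
      rw [hd] at h3
      omega
    · have hlt : j.val < i.val := by omega
      have hd : Nat.dist i.val j.val = i.val - j.val := by
        rw [Nat.dist_comm]; exact Nat.dist_eq_sub_of_le (le_of_lt hlt)
      have hi1 : i.val - 1 < n + 1 := by omega
      obtain ⟨p, hp⟩ := layer_walk (i.val - 1 - j.val) j ⟨i.val - 1, hi1⟩ (by simp; omega)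
      have hadj : (mycielskian (pathGraph (n+1))).Adj (Sum.inr (Sum.inl i))
          (Sum.inl ⟨i.val - 1, hi1⟩) := myc_adj_uv.mpr (pAdj (by simp [Nat.dist]; omega))
      refine dist_eq' (Walk.cons hadj p.reverse) ?_ lb
      rw [Walk.length_cons, Walk.length_reverse, hp, hd]
      rw [hd] at h3
      omega
  · refine dist_eq'
      (Walk.cons (myc_adj_uw (a := i) (c := ()))
        (Walk.cons (myc_adj_wu (a := nbr j) (c := ()))
          (Walk.cons ((myc_adj_uv (a := nbr j) (b := j)).mpr (nbr_adj hn j).symm) Walk.nil))) ?_ lb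
    simp
    omega


/-! ### Arithmetic sum lemmas -/

lemma sumT4 (m : ℕ) (hm : 3 ≤ m) :
    ∑ k ∈ Finset.range m, ((1:ℚ)/2) ^ (min (k+1) 4) = ((m:ℚ) + 11)/16 := by
  induction m, hm using Nat.le_induction with
  | base => simp [Finset.sum_range_succ]; norm_num
  | succ m hm ih =>
    rw [Finset.sum_range_succ, ih, min_eq_right (by omega)]
    push_cast; ring

lemma sumT3 (m : ℕ) (hm : 2 ≤ m) :
    ∑ k ∈ Finset.range m, ((1:ℚ)/2) ^ (min (k+1) 3) = ((m:ℚ) + 4)/8 := by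
  induction m, hm using Nat.le_induction with
  | base => simp [Finset.sum_range_succ]; norm_num
  | succ m hm ih =>
    rw [Finset.sum_range_succ, ih, min_eq_right (by omega)]
    push_cast; ring

lemma rowEq (c m : ℕ) :
    ∑ j ∈ Finset.range m, ((1:ℚ)/2) ^ (min (Nat.dist m j) c)
      = ∑ k ∈ Finset.range m, ((1:ℚ)/2) ^ (min (k+1) c) := by
  rw [← Finset.sum_range_reflect (fun k => ((1:ℚ)/2) ^ (min (k+1) c)) m]
  refine Finset.sum_congr rfl fun j hj => ?_
  rw [Finset.mem_range] at hj
  have hd : Nat.dist m j = m - 1 - j + 1 := by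
    rw [Nat.dist_comm, Nat.dist_eq_sub_of_le hj.le]
    omega
  rw [hd]

lemma sumB4 (m : ℕ) (hm : 3 ≤ m) :
    ∑ i ∈ Finset.range m, ∑ j ∈ Finset.range m, ((1:ℚ)/2) ^ (min (Nat.dist i j) 4)
      = ((m:ℚ)^2 + 37*m - 32)/16 := by
  induction m, hm using Nat.le_induction with
  | base =>
    simp [Finset.sum_range_succ, Nat.dist]
    norm_num
  | succ m hm ih =>
    have hrow : ∑ j ∈ Finset.range m, ((1:ℚ)/2) ^ (min (Nat.dist m j) 4) = ((m:ℚ)+11)/16 :=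
      (rowEq 4 m).trans (sumT4 m hm)
    have hcol : ∑ i ∈ Finset.range m, ((1:ℚ)/2) ^ (min (Nat.dist i m) 4) = ((m:ℚ)+11)/16 := by
      rw [← hrow]
      exact Finset.sum_congr rfl fun i _ => by rw [Nat.dist_comm]
    rw [Finset.sum_range_succ,
      Finset.sum_congr rfl (fun i (_ : i ∈ Finset.range m) =>
        Finset.sum_range_succ (fun j => ((1:ℚ)/2) ^ (min (Nat.dist i j) 4)) m),
      Finset.sum_add_distrib, ih, hcol, Finset.sum_range_succ, hrow, Nat.dist_self]
    push_cast
    norm_num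
    ring

lemma sumB3 (m : ℕ) (hm : 2 ≤ m) :
    ∑ i ∈ Finset.range m, ∑ j ∈ Finset.range m, ((1:ℚ)/2) ^ (min (Nat.dist i j) 3)
      = ((m:ℚ)^2 + 15*m - 10)/8 := by
  induction m, hm using Nat.le_induction with
  | base =>
    simp [Finset.sum_range_succ, Nat.dist]
    norm_num
  | succ m hm ih =>
    have hrow : ∑ j ∈ Finset.range m, ((1:ℚ)/2) ^ (min (Nat.dist m j) 3) = ((m:ℚ)+4)/8 :=
      (rowEq 3 m).trans (sumT3 m hm)
    have hcol : ∑ i ∈ Finset.range m, ((1:ℚ)/2) ^ (min (Nat.dist i m) 3) = ((m:ℚ)+4)/8 := by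
      rw [← hrow]
      exact Finset.sum_congr rfl fun i _ => by rw [Nat.dist_comm]
    rw [Finset.sum_range_succ,
      Finset.sum_congr rfl (fun i (_ : i ∈ Finset.range m) =>
        Finset.sum_range_succ (fun j => ((1:ℚ)/2) ^ (min (Nat.dist i j) 3)) m),
      Finset.sum_add_distrib, ih, hcol, Finset.sum_range_succ, hrow, Nat.dist_self]
    push_cast
    norm_num
    ring

lemma sumS4 (n : ℕ) (hn : 2 ≤ n) :
    ∑ i : Fin (n+1), ∑ j : Fin (n+1), ((1:ℚ)/2) ^ (min (Nat.dist i.val j.val) 4)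
      = (((n:ℚ)+1)^2 + 37*((n:ℚ)+1) - 32)/16 := by
  rw [Fin.sum_univ_eq_sum_range
    (fun i => ∑ j : Fin (n+1), ((1:ℚ)/2) ^ (min (Nat.dist i j.val) 4)) (n+1)]
  rw [Finset.sum_congr rfl (fun i (_ : i ∈ Finset.range (n+1)) =>
    Fin.sum_univ_eq_sum_range (fun j => ((1:ℚ)/2) ^ (min (Nat.dist i j) 4)) (n+1))]
  rw [sumB4 (n+1) (by omega)]
  push_cast
  ring

lemma sumS3 (n : ℕ) (hn : 2 ≤ n) :
    ∑ i : Fin (n+1), ∑ j : Fin (n+1), ((1:ℚ)/2) ^ (min (Nat.dist i.val j.val) 3)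
      = (((n:ℚ)+1)^2 + 15*((n:ℚ)+1) - 10)/8 := by
  rw [Fin.sum_univ_eq_sum_range
    (fun i => ∑ j : Fin (n+1), ((1:ℚ)/2) ^ (min (Nat.dist i j.val) 3)) (n+1)]
  rw [Finset.sum_congr rfl (fun i (_ : i ∈ Finset.range (n+1)) =>
    Fin.sum_univ_eq_sum_range (fun j => ((1:ℚ)/2) ^ (min (Nat.dist i j) 3)) (n+1))]
  rw [sumB3 (n+1) (by omega)]
  push_cast
  ring


/-! ### Closeness of the path Mycielskian -/

def gP (n : ℕ) : (Fin (n+1) ⊕ Fin (n+1) ⊕ Unit) → (Fin (n+1) ⊕ Fin (n+1) ⊕ Unit) → ℚ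
  | Sum.inl i, Sum.inl j => if j = i then 0 else ((1:ℚ)/2)^(min (Nat.dist i.val j.val) 4)
  | Sum.inl i, Sum.inr (Sum.inl j) =>
      if j = i then 1/4 else ((1:ℚ)/2)^(min (Nat.dist i.val j.val) 3)
  | Sum.inl _, Sum.inr (Sum.inr _) => 1/4
  | Sum.inr (Sum.inl i), Sum.inl j =>
      if j = i then 1/4 else ((1:ℚ)/2)^(min (Nat.dist i.val j.val) 3)
  | Sum.inr (Sum.inl i), Sum.inr (Sum.inl j) => if j = i then 0 else 1/4
  | Sum.inr (Sum.inl _), Sum.inr (Sum.inr _) => 1/2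
  | Sum.inr (Sum.inr _), Sum.inl _ => 1/4
  | Sum.inr (Sum.inr _), Sum.inr (Sum.inl _) => 1/2
  | Sum.inr (Sum.inr _), Sum.inr (Sum.inr _) => 0

open Classical in
lemma closenessP (n : ℕ) (hn : 2 ≤ n) :
    closeness (mycielskian (SimpleGraph.pathGraph (n+1))) = (9*(n:ℚ)^2 + 95*n + 14)/16 := by
  have hn1 : 1 ≤ n := by omega
  unfold closeness
  calc _
      = ∑ x : Fin (n+1) ⊕ Fin (n+1) ⊕ Unit, ∑ y : Fin (n+1) ⊕ Fin (n+1) ⊕ Unit, gP n x y := by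
        refine Finset.sum_congr rfl fun x _ => Finset.sum_congr rfl fun y _ => ?_
        rcases x with a | a | c <;> rcases y with b | b | c'
        · -- v v
          simp only [gP]
          by_cases h : b = a
          · subst h; simp
          · rw [if_neg (by simp [h]), if_neg h,
              dist_vv' hn1 a b (fun hh => h hh.symm)]
        · -- v u
          simp only [gP]
          rw [if_neg (by simp)]
          by_cases h : b = a
          · subst h
            rw [if_pos rfl, SimpleGraph.dist_comm, dist_uv_same hn1 b]
            norm_num
          · rw [if_neg h, SimpleGraph.dist_comm, dist_uv' hn1 b a h, Nat.dist_comm]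
        · -- v w
          obtain ⟨⟩ := c'
          simp only [gP]
          rw [if_neg (by simp), dist_vw hn1 a]
          norm_num
        · -- u v
          simp only [gP]
          rw [if_neg (by simp)]
          by_cases h : b = a
          · subst h
            rw [if_pos rfl, dist_uv_same hn1 b]
            norm_num
          · rw [if_neg h, dist_uv' hn1 a b (fun hh => h hh.symm)]
        · -- u u
          simp only [gP]
          by_cases h : b = a
          · subst h; simp
          · rw [if_neg (by simp [h]), if_neg h, dist_uu' a b (fun hh => h hh.symm)]
            norm_num
        · -- u w
          obtain ⟨⟩ := c'
          simp only [gP]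
          rw [if_neg (by simp), dist_uw a]
          norm_num
        · -- w v
          obtain ⟨⟩ := c
          simp only [gP]
          rw [if_neg (by simp), SimpleGraph.dist_comm, dist_vw hn1 b]
          norm_num
        · -- w u
          obtain ⟨⟩ := c
          simp only [gP]
          rw [if_neg (by simp), SimpleGraph.dist_comm, dist_uw b]
          norm_num
        · -- w w
          obtain ⟨⟩ := c; obtain ⟨⟩ := c'
          simp [gP]
    _ = (9*(n:ℚ)^2 + 95*n + 14)/16 := by
        have hBVV : ∑ i : Fin (n+1), ∑ j : Fin (n+1),
            (if j = i then (0:ℚ) else ((1:ℚ)/2)^(min (Nat.dist i.val j.val) 4))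
            = (((n:ℚ)+1)^2 + 37*((n:ℚ)+1) - 32)/16 - ((n:ℚ)+1) := by
          have hpt : ∀ i j : Fin (n+1),
              (if j = i then (0:ℚ) else ((1:ℚ)/2)^(min (Nat.dist i.val j.val) 4))
              = ((1:ℚ)/2)^(min (Nat.dist i.val j.val) 4) - (if j = i then (1:ℚ) else 0) := by
            intro i j
            by_cases h : j = i
            · subst h; simp [Nat.dist_self]
            · simp [h]
          rw [Finset.sum_congr rfl fun i _ => Finset.sum_congr rfl fun j _ => hpt i j]
          simp only [Finset.sum_sub_distrib]
          rw [sumS4 n hn]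
          simp only [Finset.sum_ite_eq' Finset.univ, Finset.mem_univ, if_true,
            Finset.sum_const, Finset.card_univ, Fintype.card_fin, smul_eq_mul, mul_one]
          push_cast
          ring
        have hBVU : ∑ i : Fin (n+1), ∑ j : Fin (n+1),
            (if j = i then (1:ℚ)/4 else ((1:ℚ)/2)^(min (Nat.dist i.val j.val) 3))
            = (((n:ℚ)+1)^2 + 15*((n:ℚ)+1) - 10)/8 - (3/4)*((n:ℚ)+1) := by
          have hpt : ∀ i j : Fin (n+1),
              (if j = i then (1:ℚ)/4 else ((1:ℚ)/2)^(min (Nat.dist i.val j.val) 3))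
              = ((1:ℚ)/2)^(min (Nat.dist i.val j.val) 3) - (if j = i then (3:ℚ)/4 else 0) := by
            intro i j
            by_cases h : j = i
            · subst h; simp [Nat.dist_self]; norm_num
            · simp [h]
          rw [Finset.sum_congr rfl fun i _ => Finset.sum_congr rfl fun j _ => hpt i j]
          simp only [Finset.sum_sub_distrib]
          rw [sumS3 n hn]
          simp only [Finset.sum_ite_eq' Finset.univ, Finset.mem_univ, if_true,
            Finset.sum_const, Finset.card_univ, Fintype.card_fin, smul_eq_mul]
          push_cast
          ring
        have hBUU : ∑ i : Fin (n+1), ∑ j : Fin (n+1),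
            (if j = i then (0:ℚ) else 1/4)
            = (((n:ℚ)+1)^2 - ((n:ℚ)+1))/4 := by
          have hpt : ∀ i j : Fin (n+1),
              (if j = i then (0:ℚ) else 1/4)
              = 1/4 - (if j = i then (1:ℚ)/4 else 0) := by
            intro i j
            by_cases h : j = i <;> simp [h]
          rw [Finset.sum_congr rfl fun i _ => Finset.sum_congr rfl fun j _ => hpt i j]
          simp only [Finset.sum_sub_distrib]
          simp only [Finset.sum_ite_eq' Finset.univ, Finset.mem_univ, if_true,
            Finset.sum_const, Finset.card_univ, Fintype.card_fin, smul_eq_mul]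
          push_cast
          ring
        simp only [Fintype.sum_sum_type, gP]
        simp only [Finset.sum_add_distrib, Fintype.sum_unique, Finset.sum_const,
          Finset.card_univ, Fintype.card_fin, smul_eq_mul]
        rw [hBVV, hBVU, hBUU]
        simp only [Fintype.card_unit, smul_eq_mul, nsmul_eq_mul, one_smul, one_mul]
        push_cast
        ring

end Aux

/-- For `n ≥ 2`,
`C(μ(S_n)) - C(μ(P_n)) = (7n² - 23n + 18)/16 ≥ 0`; in particular
`C(μ(S₂)) = C(μ(P₂))` and `C(μ(S_n)) > C(μ(P_n))` for all `n > 2`. -/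
theorem stmt_19 (n : ℕ) (hn : 2 ≤ n) :
    closeness (mycielskian (_root_.starGraph n)) -
        closeness (mycielskian (SimpleGraph.pathGraph (n + 1))) =
      (7 * (n : ℚ) ^ 2 - 23 * n + 18) / 16 ∧
    0 ≤ (7 * (n : ℚ) ^ 2 - 23 * n + 18) / 16 ∧
    closeness (mycielskian (_root_.starGraph 2)) =
      closeness (mycielskian (SimpleGraph.pathGraph 3)) ∧
    (2 < n →
      closeness (mycielskian (SimpleGraph.pathGraph (n + 1))) <
        closeness (mycielskian (_root_.starGraph n))) := by
  have hS := Aux.closenessS n hn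
  have hP := Aux.closenessP n hn
  have hS2 := Aux.closenessS 2 (le_refl 2)
  have hP2 : closeness (mycielskian (SimpleGraph.pathGraph 3)) =
      (9*((2:ℕ):ℚ)^2 + 95*((2:ℕ):ℚ) + 14)/16 := Aux.closenessP 2 (le_refl 2)
  have hn' : (2:ℚ) ≤ (n:ℚ) := by exact_mod_cast hn
  refine ⟨?_, ?_, ?_, ?_⟩
  · rw [hS, hP]; ring
  · nlinarith [sq_nonneg ((n:ℚ) - 2)]
  · rw [hS2, hP2]; norm_num
  · intro h3
    have h3' : (3:ℚ) ≤ (n:ℚ) := by exact_mod_cast h3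
    rw [hS, hP]
    nlinarith [sq_nonneg ((n:ℚ) - 3)]
end
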